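/- Let 𝒳 = (X_n, ρ_m^n) be a projective spectrum of Fréchet spaces with continuous linking maps such that for every n there exists m > n with ρ_m^n(X_m) contained in the closure in X_n of ρ_k^n(X_k) for every k > m. Then the derived projective limit Proj¹ 𝒳 vanishes: the map Ψ : ∏_n X_n → ∏_n X_n, (x_n) ↦ (x_n - ρ_{n+1}^n(x_{n+1})), is surjective. -/

import Mathlib

open Filter Topology Set Pointwise

lemma cauchySeq_of_controlled_diff {G : Type*} [AddCommGroup G] [UniformSpace G]
    [IsUniformAddGroup G] (u : ℕ → Set G) (hu : (𝓝 (0:G)).HasAntitoneBasis u)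
    (hadd : ∀ k, u (k+1) + u (k+1) ⊆ u k) (f : ℕ → G) (N₀ : ℕ)
    (hf : ∀ m, N₀ ≤ m → f (m+1) - f m ∈ u m) : CauchySeq f := by
  have h0 : ∀ k, (0:G) ∈ u k := fun k => mem_of_mem_nhds (hu.toHasBasis.mem_of_mem trivial)
  have claim : ∀ d m, N₀ ≤ m → f (m+1+d) - f (m+1) ∈ u m := by
    intro d
    induction d with
    | zero => intro m _; simpa using h0 m
    | succ d ih =>
      intro m hm
      have h1 : f (m+2+d) - f (m+2) ∈ u (m+1) := ih (m+1) (hm.trans (Nat.le_succ m))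
      have h2 : f (m+2) - f (m+1) ∈ u (m+1) := hf (m+1) (hm.trans (Nat.le_succ m))
      have : (f (m+2+d) - f (m+2)) + (f (m+2) - f (m+1)) ∈ u m :=
        hadd m (Set.add_mem_add h1 h2)
      have he : m+1+(d+1) = m+2+d := by omega
      rw [he]
      simpa using this
  have key : ∀ m n, N₀ ≤ m → m+1 ≤ n → f n - f (m+1) ∈ u m := by
    intro m n hm hn
    obtain ⟨d, rfl⟩ : ∃ d, n = m+1+d := ⟨n - (m+1), by omega⟩
    exact claim d m hm
  rw [cauchySeq_iff]
  intro V hV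
  rw [uniformity_eq_comap_nhds_zero G, Filter.mem_comap] at hV
  obtain ⟨W, hW, hWV⟩ := hV
  have hnW : (fun x : G => -x) ⁻¹' W ∈ 𝓝 (0:G) := by
    have := (continuous_neg (G := G)).continuousAt (x := (0:G))
    simpa using this.preimage_mem_nhds (by simpa using hW)
  obtain ⟨K, -, hK⟩ := hu.toHasBasis.mem_iff.mp (Filter.inter_mem hW hnW)
  refine ⟨max N₀ K + 1, ?_⟩
  intro k hk l hl
  apply hWV
  have hmono : u K ⊆ W ∩ ((fun x : G => -x) ⁻¹' W) := hK
  rcases le_total k l with h | h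
  · obtain ⟨m, rfl⟩ : ∃ m, k = m + 1 := ⟨k - 1, by omega⟩
    have h1 : f l - f (m+1) ∈ u m := key m l (by omega) (by omega)
    exact (hmono (hu.antitone (by omega : K ≤ m) h1)).1
  · obtain ⟨m, rfl⟩ : ∃ m, l = m + 1 := ⟨l - 1, by omega⟩
    have h1 : f k - f (m+1) ∈ u m := key m k (by omega) (by omega)
    have h2 := (hmono (hu.antitone (by omega : K ≤ m) h1)).2
    simpa [Set.mem_preimage, neg_sub] using h2

theorem stmt_10 (X : ℕ → Type*) [∀ n, AddCommGroup (X n)] [∀ n, Module ℝ (X n)]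
    [∀ n, UniformSpace (X n)] [∀ n, IsUniformAddGroup (X n)]
    [∀ n, ContinuousSMul ℝ (X n)] [∀ n, LocallyConvexSpace ℝ (X n)]
    [∀ n, TopologicalSpace.MetrizableSpace (X n)] [∀ n, CompleteSpace (X n)]
    (ρ : ∀ n m : ℕ, n ≤ m → X m →L[ℝ] X n)
    (hid : ∀ n (x : X n), ρ n n le_rfl x = x)
    (hcomp : ∀ (n m k : ℕ) (h1 : n ≤ m) (h2 : m ≤ k) (x : X k),
      ρ n m h1 (ρ m k h2 x) = ρ n k (h1.trans h2) x)
    (hdense : ∀ n : ℕ, ∃ m : ℕ, ∃ h : n < m, ∀ k : ℕ, ∀ h2 : m < k,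
      Set.range (ρ n m h.le) ⊆ closure (Set.range (ρ n k (h.le.trans h2.le)))) :
    ∀ y : (∀ n, X n), ∃ x : (∀ n, X n),
      ∀ n, x n - ρ n (n+1) (Nat.le_succ n) (x (n+1)) = y n := by
  intro y
  classical
  choose M hMlt hMdense using hdense
  let φ : ℕ → ℕ := fun j => Nat.rec 0 (fun _ ih => M ih) j
  have hφlt : ∀ j, φ j < φ (j+1) := fun j => hMlt (φ j)
  have hφmono : Monotone φ := monotone_nat_of_le_succ (fun j => (hφlt j).le)
  have hφge : ∀ j, j ≤ φ j := by
    intro j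
    induction j with
    | zero => exact Nat.zero_le _
    | succ j ih => have := hφlt j; omega
  have hφle : ∀ {n j : ℕ}, n ≤ j → n ≤ φ j := fun h => h.trans (hφge _)
  -- neighborhood bases
  have hUex : ∀ n, ∃ u : ℕ → Set (X n), (𝓝 (0 : X n)).HasAntitoneBasis u ∧
      ∀ k, u (k+1) + u (k+1) ⊆ u k :=
    fun n => IsTopologicalAddGroup.exists_antitone_basis_nhds_zero (X n)
  choose U hUb hUadd using hUex
  -- partial sums
  set S : ∀ n : ℕ, ℕ → X n :=
    (fun n k => ∑ i ∈ Finset.Ico n k, if h : n ≤ i then ρ n i h (y i) else 0) with hS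
  have hSB : ∀ n a b (h1 : n ≤ a), a ≤ b → S n b = S n a + ρ n a h1 (S a b) := by
    intro n a b h1 h2
    simp only [hS]
    rw [map_sum]
    rw [← Finset.sum_Ico_consecutive (fun i => if h : n ≤ i then ρ n i h (y i) else 0) h1 h2]
    congr 1
    refine Finset.sum_congr rfl ?_
    intro i hi
    rw [Finset.mem_Ico] at hi
    rw [dif_pos hi.1, dif_pos (h1.trans hi.1)]
    exact (hcomp n a i h1 hi.1 (y i)).symm
  have hSA : ∀ n k (h : n+1 ≤ k), S n k - ρ n (n+1) (Nat.le_succ n) (S (n+1) k) = y n := by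
    intro n k h
    rw [hSB n (n+1) k (Nat.le_succ n) h]
    have hsingle : S n (n+1) = y n := by
      simp only [hS]
      rw [Nat.Ico_succ_singleton, Finset.sum_singleton, dif_pos le_rfl, hid]
    rw [hsingle]; abel
  -- key approximation step
  have hkey : ∀ (m : ℕ) (a : X (φ (m+1))), ∃ b : X (φ (m+2)),
      ∀ n (hn : n ≤ m), ρ n (φ (m+2)) (hφle (by omega : n ≤ m+2)) b
        - ρ n (φ (m+1)) (hφle (by omega : n ≤ m+1)) a ∈ U n (m+1) := by
    intro m a
    have hple : φ m ≤ φ (m+1) := hφmono (Nat.le_succ m)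
    have hlt2 : φ (m+1) < φ (m+2) := hφlt (m+1)
    set g : X (φ m) := ρ (φ m) (φ (m+1)) hple a with hg
    have hgc : g ∈ closure (Set.range (ρ (φ m) (φ (m+2)) (hple.trans hlt2.le))) := by
      have hd := hMdense (φ m) (φ (m+2)) (show M (φ m) < φ (m+2) from hφlt (m+1))
      exact hd ⟨a, rfl⟩
    set V : Set (X (φ m)) := ⋂ n ∈ Finset.range (m+1),
        (@dite _ (n ≤ φ m) (Nat.decLe _ _)
          (fun h => (ρ n (φ m) h) ⁻¹' (U n (m+1))) (fun _ => Set.univ)) with hV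
    have hVmem : V ∈ 𝓝 (0 : X (φ m)) := by
      rw [hV, Filter.biInter_finset_mem]
      intro i hi
      rw [Finset.mem_range] at hi
      have hip : i ≤ φ m := le_trans (by omega) (hφge m)
      rw [dif_pos hip]
      apply ContinuousAt.preimage_mem_nhds ((ρ i (φ m) hip).continuous.continuousAt)
      rw [map_zero]
      exact (hUb i).toHasBasis.mem_of_mem trivial
    have hW : {x : X (φ m) | x - g ∈ V} ∈ 𝓝 g := by
      have hc0 : ContinuousAt (fun x : X (φ m) => x - g) g :=
        (continuous_id.sub continuous_const).continuousAt
      have := hc0.preimage_mem_nhds (by simpa using hVmem)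
      exact this
    obtain ⟨w, hw1, hw2⟩ := mem_closure_iff_nhds.mp hgc _ hW
    obtain ⟨b, rfl⟩ := hw2
    simp only [Set.mem_setOf_eq] at hw1
    refine ⟨b, ?_⟩
    intro n hn
    have hnp : n ≤ φ m := le_trans hn (hφge m)
    have hmem : ρ n (φ m) hnp (ρ (φ m) (φ (m+2)) (hple.trans hlt2.le) b - g) ∈ U n (m+1) := by
      have h4 := Set.mem_iInter₂.mp (by rw [hV] at hw1; exact hw1) n
        (Finset.mem_range.mpr (by omega))
      rw [dif_pos hnp] at h4
      exact h4
    have heq : ρ n (φ (m+2)) (hφle (by omega : n ≤ m+2)) b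
        - ρ n (φ (m+1)) (hφle (by omega : n ≤ m+1)) a
        = ρ n (φ m) hnp (ρ (φ m) (φ (m+2)) (hple.trans hlt2.le) b - g) := by
      rw [map_sub, hcomp, hg, hcomp]
    rw [heq]
    exact hmem
  -- the correcting sequence z
  let step : ∀ q : ℕ, X (φ q) → X (φ (q+1)) := fun q =>
    Nat.rec (motive := fun q => X (φ q) → X (φ (q+1))) (fun _ => 0)
      (fun m'' _ v => (hkey m'' (v - S (φ (m''+1)) (φ (m''+2)))).choose) q
  let z : ∀ m, X (φ m) := fun m => Nat.rec (motive := fun m => X (φ m)) 0 (fun q ih => step q ih) m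
  have hzP : ∀ m'', ∀ n, ∀ hn : n ≤ m'',
      ρ n (φ (m''+2)) (hφle (by omega : n ≤ m''+2)) (z (m''+2))
        - ρ n (φ (m''+1)) (hφle (by omega : n ≤ m''+1))
            (z (m''+1) - S (φ (m''+1)) (φ (m''+2))) ∈ U n (m''+1) :=
    fun m'' => (hkey m'' (z (m''+1) - S (φ (m''+1)) (φ (m''+2)))).choose_spec
  -- approximating sequences
  set c : ∀ n : ℕ, ℕ → X n :=
    (fun n m => @dite _ (n ≤ φ m) (Nat.decLe _ _)
      (fun h => S n (φ m) + ρ n (φ m) h (z m)) (fun _ => 0)) with hc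
  have hdiff : ∀ n m'', n ≤ m'' → c n (m''+2) - c n (m''+1) ∈ U n (m''+1) := by
    intro n m'' hn
    have h1 : n ≤ φ (m''+1) := hφle (by omega : n ≤ m''+1)
    have h2 : n ≤ φ (m''+2) := hφle (by omega : n ≤ m''+2)
    have hab : φ (m''+1) ≤ φ (m''+2) := hφmono (by omega : m''+1 ≤ m''+2)
    simp only [hc]
    rw [dif_pos h2, dif_pos h1]
    rw [hSB n (φ (m''+1)) (φ (m''+2)) h1 hab]
    have e : (S n (φ (m''+1)) + ρ n (φ (m''+1)) h1 (S (φ (m''+1)) (φ (m''+2)))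
          + ρ n (φ (m''+2)) h2 (z (m''+2)))
        - (S n (φ (m''+1)) + ρ n (φ (m''+1)) h1 (z (m''+1)))
        = ρ n (φ (m''+2)) h2 (z (m''+2))
          - ρ n (φ (m''+1)) h1 (z (m''+1) - S (φ (m''+1)) (φ (m''+2))) := by
      rw [map_sub]; abel
    rw [e]
    exact hzP m'' n hn
  have hcauchy : ∀ n, CauchySeq (c n) := by
    intro n
    apply cauchySeq_of_controlled_diff (U n) (hUb n) (hUadd n) (c n) (n+1)
    intro m hm
    obtain ⟨m'', rfl⟩ : ∃ m'', m = m'' + 1 := ⟨m - 1, by omega⟩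
    exact hdiff n m'' (by omega)
  have hlim : ∀ n, ∃ x, Filter.Tendsto (c n) Filter.atTop (𝓝 x) :=
    fun n => cauchySeq_tendsto_of_complete (hcauchy n)
  choose x hx using hlim
  refine ⟨x, ?_⟩
  intro n
  have hT : Filter.Tendsto (fun m => c n m - ρ n (n+1) (Nat.le_succ n) (c (n+1) m)) Filter.atTop
      (𝓝 (x n - ρ n (n+1) (Nat.le_succ n) (x (n+1)))) :=
    (hx n).sub (((ρ n (n+1) (Nat.le_succ n)).continuous.tendsto (x (n+1))).comp (hx (n+1)))
  have hE : ∀ᶠ m in Filter.atTop,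
      (fun m => c n m - ρ n (n+1) (Nat.le_succ n) (c (n+1) m)) m = y n := by
    filter_upwards [Filter.eventually_ge_atTop (n+1)] with m hm
    have h2 : n+1 ≤ φ m := le_trans hm (hφge m)
    have h1 : n ≤ φ m := (Nat.le_succ n).trans h2
    simp only [hc]
    rw [dif_pos h1, dif_pos h2]
    rw [map_add]
    rw [hcomp n (n+1) (φ m) (Nat.le_succ n) h2 (z m)]
    rw [← hSA n (φ m) h2]
    abel
  exact tendsto_nhds_unique (hT.congr' hE) tendsto_const_nhds
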